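/- (Leveled blockwise spectral norm bound.) Let I be a finite index set, M a real I × I matrix, C_sp ∈ ℕ, and let P be a finite collection of pairs (τ, σ) of subsets of I equipped with a level function level : P → ℕ, such that: (i) the rectangles τ × σ for (τ, σ) ∈ P are pairwise disjoint and their union is I × I; (ii) for every ℓ ∈ ℕ and every index i ∈ I, the number of pairs (τ, σ) ∈ P with level(τ,σ) = ℓ and i ∈ τ is at most C_sp, and the number of pairs (τ, σ) ∈ P with level(τ,σ) = ℓ and i ∈ σ is at most C_sp. Then ‖M‖₂ ≤ C_sp · Σ_{ℓ ∈ ℕ} max{ ‖M|_{τ×σ}‖₂ : (τ, σ) ∈ P, level(τ,σ) = ℓ }, where the sum has finitely many nonzero terms and the maximum over an empty set is 0. -/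

import Mathlib

open Matrix

/-- The spectral norm of a real matrix: the operator norm of the induced linear map
between Euclidean spaces. -/
noncomputable def matSpectralNorm {m n : Type*} [Fintype m] [Fintype n] [DecidableEq n]
    (M : Matrix m n ℝ) : ℝ :=
  ‖LinearMap.toContinuousLinearMap (Matrix.toEuclideanLin M)‖

lemma inner_toEuclideanLin {m n : Type*} [Fintype m] [Fintype n] [DecidableEq n]
    (A : Matrix m n ℝ) (x : EuclideanSpace ℝ n) (y : EuclideanSpace ℝ m) :
    (inner ℝ y (Matrix.toEuclideanLin A x) : ℝ) = ∑ i, ∑ j, y i * A i j * x j := by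
  simp [PiLp.inner_apply, Matrix.toEuclideanLin_apply, Matrix.mulVec, dotProduct,
    Finset.mul_sum, mul_assoc, RCLike.inner_apply]
  refine Finset.sum_congr rfl fun i _ => ?_
  rw [Finset.sum_mul]; exact Finset.sum_congr rfl fun j _ => by ring

lemma bilin_le {m n : Type*} [Fintype m] [Fintype n] [DecidableEq n]
    (A : Matrix m n ℝ) (x : EuclideanSpace ℝ n) (y : EuclideanSpace ℝ m) :
    ∑ i, ∑ j, y i * A i j * x j ≤
      matSpectralNorm A * Real.sqrt (∑ i, y i ^ 2) * Real.sqrt (∑ j, x j ^ 2) := by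
  have h1 : Real.sqrt (∑ i, y i ^ 2) = ‖y‖ := by
    rw [EuclideanSpace.norm_eq]; simp [Real.norm_eq_abs, sq_abs]
  have h2 : Real.sqrt (∑ j, x j ^ 2) = ‖x‖ := by
    rw [EuclideanSpace.norm_eq]; simp [Real.norm_eq_abs, sq_abs]
  rw [← inner_toEuclideanLin, h1, h2]
  calc (inner ℝ y (Matrix.toEuclideanLin A x) : ℝ) ≤ ‖y‖ * ‖Matrix.toEuclideanLin A x‖ :=
        real_inner_le_norm _ _
    _ ≤ ‖y‖ * (matSpectralNorm A * ‖x‖) := by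
        apply mul_le_mul_of_nonneg_left _ (norm_nonneg y)
        exact (LinearMap.toContinuousLinearMap (Matrix.toEuclideanLin A)).le_opNorm x
    _ = matSpectralNorm A * ‖y‖ * ‖x‖ := by ring

lemma block_bilin_le {I : Type*} [Fintype I] [DecidableEq I]
    (M : Matrix I I ℝ) (τ σ : Finset I) (x y : I → ℝ) :
    ∑ ij ∈ τ ×ˢ σ, y ij.1 * M ij.1 ij.2 * x ij.2 ≤
      matSpectralNorm (M.submatrix (fun a : ↥τ => (a : I)) (fun b : ↥σ => (b : I))) *
        Real.sqrt (∑ i ∈ τ, y i ^ 2) * Real.sqrt (∑ j ∈ σ, x j ^ 2) := by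
  have h := bilin_le (M.submatrix (fun a : ↥τ => (a : I)) (fun b : ↥σ => (b : I)))
    (WithLp.toLp 2 (fun b : ↥σ => x b) : EuclideanSpace ℝ ↥σ) (WithLp.toLp 2 (fun a : ↥τ => y a) : EuclideanSpace ℝ ↥τ)
  simp only [Matrix.submatrix_apply, PiLp.toLp_apply] at h
  rw [Finset.sum_product, ← Finset.sum_coe_sort τ, ← Finset.sum_coe_sort σ (fun j => x j ^ 2),
    ← Finset.sum_coe_sort τ (fun i => y i ^ 2)]
  calc ∑ a : ↥τ, ∑ j ∈ σ, y ↑a * M ↑a j * x j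
      = ∑ a : ↥τ, ∑ b : ↥σ, y ↑a * M ↑a ↑b * x ↑b := by
        refine Finset.sum_congr rfl fun a _ => ?_
        rw [← Finset.sum_coe_sort σ (fun j => y ↑a * M ↑a j * x j)]
    _ ≤ _ := h

/-- Leveled blockwise spectral norm bound: if the rectangles `τ × σ`, `(τ,σ) ∈ P`, form a
partition of `I × I` and on each level each index belongs to at most `C_sp` row blocks
and at most `C_sp` column blocks, then
`‖M‖₂ ≤ C_sp · Σ_ℓ max{ ‖M|_{τ×σ}‖₂ : (τ,σ) ∈ P, level (τ,σ) = ℓ }`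
(`sSup ∅ = 0` by convention; the sum has finitely many nonzero terms). -/
theorem leveled_blockwise_norm_bound {I : Type*} [Fintype I] [DecidableEq I]
    (M : Matrix I I ℝ) (Csp : ℕ) (P : Finset (Finset I × Finset I))
    (level : Finset I × Finset I → ℕ)
    (hdisj : (P : Set (Finset I × Finset I)).PairwiseDisjoint (fun p => p.1 ×ˢ p.2))
    (hcover : ∀ i j : I, ∃ p ∈ P, i ∈ p.1 ∧ j ∈ p.2)
    (hrow : ∀ (ℓ : ℕ) (i : I), (P.filter (fun p => level p = ℓ ∧ i ∈ p.1)).card ≤ Csp)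
    (hcol : ∀ (ℓ : ℕ) (i : I), (P.filter (fun p => level p = ℓ ∧ i ∈ p.2)).card ≤ Csp) :
    matSpectralNorm M ≤ Csp * ∑' ℓ : ℕ, sSup ((fun p : Finset I × Finset I =>
      matSpectralNorm (M.submatrix (fun a : ↥p.1 => (a : I)) (fun b : ↥p.2 => (b : I)))) ''
        {p ∈ (P : Set (Finset I × Finset I)) | level p = ℓ}) := by
  classical
  set F : Finset I × Finset I → ℝ := fun p =>
    matSpectralNorm (M.submatrix (fun a : ↥p.1 => (a : I)) (fun b : ↥p.2 => (b : I))) with hF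
  set S : ℕ → ℝ := fun ℓ => sSup (F '' {p ∈ (P : Set (Finset I × Finset I)) | level p = ℓ})
    with hSdef
  set L : Finset ℕ := P.image level with hL
  have hS0 : ∀ ℓ ∉ L, S ℓ = 0 := by
    intro ℓ hℓ
    have hempty : {p ∈ (P : Set (Finset I × Finset I)) | level p = ℓ}
        = (∅ : Set (Finset I × Finset I)) := by
      ext p; simp only [Set.mem_setOf_eq, Set.mem_empty_iff_false, iff_false, not_and]
      intro hp hlev
      exact hℓ (hL ▸ (hlev ▸ Finset.mem_image_of_mem level (Finset.mem_coe.mp hp)))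
    show sSup (F '' {p ∈ (P : Set (Finset I × Finset I)) | level p = ℓ}) = 0
    rw [hempty, Set.image_empty, Real.sSup_empty]
  have hbdd : ∀ ℓ : ℕ, BddAbove (F '' {p ∈ (P : Set (Finset I × Finset I)) | level p = ℓ}) := by
    intro ℓ
    exact ((P.finite_toSet.subset (Set.sep_subset _ _)).image F).bddAbove
  have hSle : ∀ p ∈ P, F p ≤ S (level p) := by
    intro p hp
    exact le_csSup (hbdd (level p)) ⟨p, ⟨hp, rfl⟩, rfl⟩
  have hSnonneg : ∀ ℓ, 0 ≤ S ℓ := by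
    intro ℓ
    rcases Set.eq_empty_or_nonempty (F '' {p ∈ (P : Set (Finset I × Finset I)) | level p = ℓ})
      with h | ⟨v, hv⟩
    · show (0:ℝ) ≤ sSup (F '' {p ∈ (P : Set (Finset I × Finset I)) | level p = ℓ})
      rw [h, Real.sSup_empty]
    · obtain ⟨p, hp, rfl⟩ := hv
      exact le_trans (norm_nonneg _) (le_csSup (hbdd ℓ) ⟨p, hp, rfl⟩)
  have htsum : ∑' ℓ : ℕ, S ℓ = ∑ ℓ ∈ L, S ℓ := tsum_eq_sum hS0
  have hsum_nonneg : 0 ≤ ∑ ℓ ∈ L, S ℓ := Finset.sum_nonneg fun ℓ _ => hSnonneg ℓ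
  set c : ℝ := Csp * ∑ ℓ ∈ L, S ℓ with hc
  have hc0 : 0 ≤ c := mul_nonneg (Nat.cast_nonneg _) hsum_nonneg
  set T := LinearMap.toContinuousLinearMap (Matrix.toEuclideanLin M) with hT
  -- the key bilinear bound
  have key : ∀ x y : EuclideanSpace ℝ I, (inner ℝ y (T x) : ℝ) ≤ c * ‖y‖ * ‖x‖ := by
    intro x y
    have h1 : Real.sqrt (∑ i, y i ^ 2) = ‖y‖ := by
      rw [EuclideanSpace.norm_eq]; simp [Real.norm_eq_abs, sq_abs]
    have h2 : Real.sqrt (∑ j, x j ^ 2) = ‖x‖ := by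
      rw [EuclideanSpace.norm_eq]; simp [Real.norm_eq_abs, sq_abs]
    have hcov : (Finset.univ ×ˢ Finset.univ : Finset (I × I))
        = P.biUnion (fun p => p.1 ×ˢ p.2) := by
      ext ⟨i, j⟩
      simp only [Finset.mem_product, Finset.mem_univ, true_and, Finset.mem_biUnion]
      exact ⟨fun _ => by simpa [Finset.mem_product] using hcover i j, fun _ => trivial⟩
    have expand : (inner ℝ y (T x) : ℝ)
        = ∑ p ∈ P, ∑ ij ∈ p.1 ×ˢ p.2, y ij.1 * M ij.1 ij.2 * x ij.2 := by
      rw [show T x = Matrix.toEuclideanLin M x from rfl, inner_toEuclideanLin,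
        ← Finset.sum_product', hcov, Finset.sum_biUnion hdisj]
    have hfiber : ∑ p ∈ P, ∑ ij ∈ p.1 ×ˢ p.2, y ij.1 * M ij.1 ij.2 * x ij.2
        = ∑ ℓ ∈ L, ∑ p ∈ P.filter (fun p => level p = ℓ),
            ∑ ij ∈ p.1 ×ˢ p.2, y ij.1 * M ij.1 ij.2 * x ij.2 :=
      (Finset.sum_fiberwise_of_maps_to (fun p hp => Finset.mem_image_of_mem level hp) _).symm
    rw [expand, hfiber]
    have hlevel : ∀ ℓ ∈ L, ∑ p ∈ P.filter (fun p => level p = ℓ),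
        ∑ ij ∈ p.1 ×ˢ p.2, y ij.1 * M ij.1 ij.2 * x ij.2
        ≤ S ℓ * ((Csp : ℝ) * (‖y‖ * ‖x‖)) := by
      intro ℓ _
      set Pl := P.filter (fun p => level p = ℓ) with hPl
      have step1 : ∑ p ∈ Pl, ∑ ij ∈ p.1 ×ˢ p.2, y ij.1 * M ij.1 ij.2 * x ij.2
          ≤ ∑ p ∈ Pl, S ℓ * (Real.sqrt (∑ i ∈ p.1, y i ^ 2) * Real.sqrt (∑ j ∈ p.2, x j ^ 2)) := by
        refine Finset.sum_le_sum fun p hp => ?_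
        rcases Finset.mem_filter.mp hp with ⟨hpP, hpl⟩
        calc ∑ ij ∈ p.1 ×ˢ p.2, y ij.1 * M ij.1 ij.2 * x ij.2
            ≤ F p * Real.sqrt (∑ i ∈ p.1, y i ^ 2) * Real.sqrt (∑ j ∈ p.2, x j ^ 2) :=
              block_bilin_le M p.1 p.2 x y
          _ ≤ S ℓ * (Real.sqrt (∑ i ∈ p.1, y i ^ 2) * Real.sqrt (∑ j ∈ p.2, x j ^ 2)) := by
              rw [mul_assoc]
              exact mul_le_mul_of_nonneg_right (hpl ▸ hSle p hpP)
                (mul_nonneg (Real.sqrt_nonneg _) (Real.sqrt_nonneg _))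
      have step3 : ∑ p ∈ Pl, Real.sqrt (∑ i ∈ p.1, y i ^ 2) * Real.sqrt (∑ j ∈ p.2, x j ^ 2)
          ≤ Real.sqrt (∑ p ∈ Pl, ∑ i ∈ p.1, y i ^ 2)
            * Real.sqrt (∑ p ∈ Pl, ∑ j ∈ p.2, x j ^ 2) :=
        Real.sum_sqrt_mul_sqrt_le _ (fun p => Finset.sum_nonneg fun i _ => sq_nonneg _)
          (fun p => Finset.sum_nonneg fun j _ => sq_nonneg _)
      have count : ∀ (z : I → ℝ) (proj : Finset I × Finset I → Finset I),
          (∀ i : I, (P.filter (fun p => level p = ℓ ∧ i ∈ proj p)).card ≤ Csp) →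
          ∑ p ∈ Pl, ∑ i ∈ proj p, z i ^ 2 ≤ (Csp : ℝ) * ∑ i, z i ^ 2 := by
        intro z proj hcount
        calc ∑ p ∈ Pl, ∑ i ∈ proj p, z i ^ 2
            = ∑ p ∈ Pl, ∑ i : I, if i ∈ proj p then z i ^ 2 else 0 := by
              refine Finset.sum_congr rfl fun p _ => ?_
              rw [Finset.sum_ite_mem, Finset.univ_inter]
          _ = ∑ i : I, ∑ p ∈ Pl, if i ∈ proj p then z i ^ 2 else 0 := Finset.sum_comm
          _ = ∑ i : I, ((Pl.filter (fun p => i ∈ proj p)).card : ℝ) * z i ^ 2 := by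
              refine Finset.sum_congr rfl fun i _ => ?_
              rw [← Finset.sum_filter, Finset.sum_const, nsmul_eq_mul]
          _ ≤ ∑ i : I, (Csp : ℝ) * z i ^ 2 := by
              refine Finset.sum_le_sum fun i _ => ?_
              refine mul_le_mul_of_nonneg_right ?_ (sq_nonneg _)
              have : Pl.filter (fun p => i ∈ proj p)
                  = P.filter (fun p => level p = ℓ ∧ i ∈ proj p) := by
                rw [hPl, Finset.filter_filter]
              rw [this]
              exact_mod_cast hcount i
          _ = (Csp : ℝ) * ∑ i, z i ^ 2 := (Finset.mul_sum _ _ _).symm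
      have step4 := count y Prod.fst (fun i => hrow ℓ i)
      have step5 := count x Prod.snd (fun i => hcol ℓ i)
      have step6 : Real.sqrt (∑ p ∈ Pl, ∑ i ∈ p.1, y i ^ 2)
            * Real.sqrt (∑ p ∈ Pl, ∑ j ∈ p.2, x j ^ 2)
          ≤ (Csp : ℝ) * (‖y‖ * ‖x‖) := by
        calc Real.sqrt (∑ p ∈ Pl, ∑ i ∈ p.1, y i ^ 2)
              * Real.sqrt (∑ p ∈ Pl, ∑ j ∈ p.2, x j ^ 2)
            ≤ Real.sqrt ((Csp : ℝ) * ∑ i, y i ^ 2) * Real.sqrt ((Csp : ℝ) * ∑ j, x j ^ 2) := by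
              refine mul_le_mul (Real.sqrt_le_sqrt step4) (Real.sqrt_le_sqrt step5)
                (Real.sqrt_nonneg _) (Real.sqrt_nonneg _)
          _ = (Csp : ℝ) * (‖y‖ * ‖x‖) := by
              rw [Real.sqrt_mul (Nat.cast_nonneg _), Real.sqrt_mul (Nat.cast_nonneg _), h1, h2]
              rw [show Real.sqrt Csp * ‖y‖ * (Real.sqrt Csp * ‖x‖)
                = (Real.sqrt Csp * Real.sqrt Csp) * (‖y‖ * ‖x‖) by ring,
                Real.mul_self_sqrt (Nat.cast_nonneg _)]
      calc ∑ p ∈ Pl, ∑ ij ∈ p.1 ×ˢ p.2, y ij.1 * M ij.1 ij.2 * x ij.2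
          ≤ ∑ p ∈ Pl, S ℓ * (Real.sqrt (∑ i ∈ p.1, y i ^ 2)
              * Real.sqrt (∑ j ∈ p.2, x j ^ 2)) := step1
        _ = S ℓ * ∑ p ∈ Pl, Real.sqrt (∑ i ∈ p.1, y i ^ 2)
              * Real.sqrt (∑ j ∈ p.2, x j ^ 2) := (Finset.mul_sum _ _ _).symm
        _ ≤ S ℓ * ((Csp : ℝ) * (‖y‖ * ‖x‖)) :=
            mul_le_mul_of_nonneg_left (step3.trans step6) (hSnonneg ℓ)
    calc ∑ ℓ ∈ L, ∑ p ∈ P.filter (fun p => level p = ℓ),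
          ∑ ij ∈ p.1 ×ˢ p.2, y ij.1 * M ij.1 ij.2 * x ij.2
        ≤ ∑ ℓ ∈ L, S ℓ * ((Csp : ℝ) * (‖y‖ * ‖x‖)) := Finset.sum_le_sum hlevel
      _ = c * ‖y‖ * ‖x‖ := by rw [← Finset.sum_mul, hc]; ring
  -- conclude
  have hnorm : matSpectralNorm M ≤ c := by
    refine ContinuousLinearMap.opNorm_le_bound T hc0 fun x => ?_
    have h := key x (T x)
    rw [real_inner_self_eq_norm_sq] at h
    rcases eq_or_lt_of_le (norm_nonneg (T x)) with h0 | h0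
    · rw [← h0]; positivity
    · have := (mul_le_mul_iff_of_pos_right h0).mp (by nlinarith : ‖T x‖ * ‖T x‖ ≤ (c * ‖x‖) * ‖T x‖)
      linarith
  calc matSpectralNorm M ≤ c := hnorm
    _ = Csp * ∑' ℓ : ℕ, S ℓ := by rw [hc, htsum]
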